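/- arXiv:2010.15404 — 2 statements merged into one kernel-verified Lean document; each statement's English description precedes it below -/
import Mathlib

section
/- If m ≥ 3, then the task quality function q is submodular: for all finite sets X, Y ⊆ {1,…,m}, q(X ∩ Y) + q(X ∪ Y) ≤ q(X) + q(Y). -/
/-- Temporal distance between slots `j` and `e`. -/
def tdist (j e : ℕ) : ℕ := ((j : ℤ) - (e : ℤ)).natAbs

/-- Padded `k`-NN distance sum `I_k^S(j)`. -/
def Ik (m k : ℕ) (S : Finset ℕ) (j : ℕ) : ℕ :=
  if k ≤ S.card then
    (((S.val.map (fun e => tdist j e)).sort (· ≤ ·)).take k).sum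
  else
    (S.val.map (fun e => tdist j e)).sum + (k - S.card) * m

/-- Interpolation error ratio `ρ^S(j)`. -/
noncomputable def rho (m k : ℕ) (S : Finset ℕ) (j : ℕ) : ℝ :=
  if j ∈ S then 0 else (Ik m k S j : ℝ) / ((k : ℝ) * (m : ℝ))

/-- Subtask finishing probability `p^S(j)`. -/
noncomputable def prob (m k : ℕ) (S : Finset ℕ) (j : ℕ) : ℝ :=
  (1 / (m : ℝ)) * (1 - rho m k S j)

/-- Task quality `q(S)` (note `Real.logb 2 0 = 0`, so the convention
`0 · log₂ 0 = 0` holds definitionally). -/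
noncomputable def quality (m k : ℕ) (S : Finset ℕ) : ℝ :=
  ∑ j ∈ Finset.Icc 1 m, -(prob m k S j * Real.logb 2 (prob m k S j))

open Real

/-! ### Auxiliary combinatorial lemmas -/

lemma countP_take_of_sorted (t : ℕ) :
    ∀ (l : List ℕ), l.Pairwise (· ≤ ·) → ∀ k,
      (l.take k).countP (fun x => x ≤ t) = min k (l.countP (fun x => x ≤ t))
  | [], _, k => by simp
  | a :: l, h, 0 => by simp
  | a :: l, h, (k+1) => by
      have h1 : ∀ b ∈ l, a ≤ b := (List.pairwise_cons.mp h).1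
      have h2 := countP_take_of_sorted t l (List.pairwise_cons.mp h).2 k
      by_cases hat : a ≤ t
      · simp only [List.take, List.countP_cons, hat]
        simp [List.countP_cons, hat, h2]
      · have hz : l.countP (fun x => decide (x ≤ t)) = 0 := by
          rw [List.countP_eq_zero]
          intro b hb
          simp only [decide_eq_true_eq]
          exact fun hbt => hat (le_trans (h1 b hb) hbt)
        have hz2 : (l.take k).countP (fun x => decide (x ≤ t)) = 0 := by
          rw [List.countP_eq_zero]
          intro b hb
          simp only [decide_eq_true_eq]
          exact fun hbt => hat (le_trans (h1 b (List.mem_of_mem_take hb)) hbt)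
        simp [List.countP_cons, hat, hz, hz2]

lemma multiset_sum_eq (m : ℕ) (M : Multiset ℕ) (h : ∀ x ∈ M, x < m) :
    M.sum = ∑ t ∈ Finset.range m, (Multiset.card M - M.countP (fun x => x ≤ t)) := by
  induction M using Multiset.induction with
  | empty => simp
  | cons a M ih =>
    have ha : a < m := h a (Multiset.mem_cons_self a M)
    have hM : ∀ x ∈ M, x < m := fun x hx => h x (Multiset.mem_cons_of_mem hx)
    have hsum := ih hM
    have hterm : ∀ t, Multiset.card (a ::ₘ M) - (a ::ₘ M).countP (fun x => x ≤ t)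
        = (Multiset.card M - M.countP (fun x => x ≤ t)) + (if t < a then 1 else 0) := by
      intro t
      have hle : M.countP (fun x => x ≤ t) ≤ Multiset.card M := Multiset.countP_le_card _ _
      rw [Multiset.countP_cons, Multiset.card_cons]
      by_cases hat : a ≤ t
      · rw [if_pos hat, if_neg (by omega : ¬ t < a)]; omega
      · rw [if_neg hat, if_pos (by omega : t < a)]; omega
    rw [Multiset.sum_cons, Finset.sum_congr rfl (fun t _ => hterm t), Finset.sum_add_distrib,
      hsum]
    have hia : ∑ t ∈ Finset.range m, (if t < a then 1 else 0) = a := by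
      rw [← Finset.sum_filter]
      have : (Finset.range m).filter (fun t => t < a) = Finset.range a := by
        ext x; simp; omega
      simp [this]
    omega

lemma Ik_eq (m k : ℕ) (S : Finset ℕ) (j : ℕ) (h : ∀ e ∈ S, tdist j e < m) :
    Ik m k S j = ∑ t ∈ Finset.range m,
      (k - min k ((S.filter (fun e => tdist j e ≤ t)).card)) := by
  set M : Multiset ℕ := S.val.map (fun e => tdist j e) with hMdef
  have hMmem : ∀ x ∈ M, x < m := by
    intro x hx
    obtain ⟨e, he, rfl⟩ := Multiset.mem_map.mp hx
    exact h e he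
  have hMcard : Multiset.card M = S.card := by simp [hMdef]
  have hcnt : ∀ t, M.countP (fun x => x ≤ t) = (S.filter (fun e => tdist j e ≤ t)).card := by
    intro t
    rw [hMdef, Multiset.countP_map]
    rfl
  unfold Ik
  by_cases hks : k ≤ S.card
  · rw [if_pos hks]
    set l : List ℕ := M.sort (· ≤ ·) with hl
    have hsorted : l.Pairwise (· ≤ ·) := Multiset.pairwise_sort (s := M) (r := (· ≤ ·))
    have hlen : l.length = S.card := by rw [hl, Multiset.length_sort, hMcard]
    have hcl : ∀ t, l.countP (fun x => x ≤ t) = (S.filter (fun e => tdist j e ≤ t)).card := by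
      intro t
      rw [← hcnt t]
      rw [hl]
      rw [← Multiset.coe_countP]
      rw [Multiset.sort_eq]
    have hmem : ∀ x ∈ (l.take k : Multiset ℕ), x < m := by
      intro x hx
      apply hMmem
      rw [← Multiset.sort_eq (s := M) (r := (· ≤ ·)), ← hl]
      exact Multiset.mem_coe.mpr (List.mem_of_mem_take (Multiset.mem_coe.mp hx))
    have := multiset_sum_eq m (l.take k : Multiset ℕ) hmem
    rw [Multiset.sum_coe] at this
    rw [this]
    apply Finset.sum_congr rfl
    intro t _
    have h1 : Multiset.card (l.take k : Multiset ℕ) = k := by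
      simp [List.length_take, hlen]; omega
    have h2 : (l.take k : Multiset ℕ).countP (fun x => x ≤ t)
        = min k (l.countP (fun x => x ≤ t)) := by
      rw [Multiset.coe_countP]
      exact countP_take_of_sorted t l hsorted k
    rw [h1, h2, hcl]
  · rw [if_neg hks]
    push_neg at hks
    have := multiset_sum_eq m M hMmem
    rw [this, hMcard]
    have : ∀ t ∈ Finset.range m,
        (k - min k ((S.filter (fun e => tdist j e ≤ t)).card))
          = (S.card - (S.filter (fun e => tdist j e ≤ t)).card) + (k - S.card) := by
      intro t _
      have hle : (S.filter (fun e => tdist j e ≤ t)).card ≤ S.card := Finset.card_filter_le _ _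
      omega
    rw [Finset.sum_congr rfl this, Finset.sum_add_distrib, Finset.sum_const, Finset.card_range,
      smul_eq_mul]
    rw [Finset.sum_congr rfl (fun t _ => by rw [hcnt t])]
    ring

lemma tdist_lt (m j e : ℕ) (hj : j ∈ Finset.Icc 1 m) (he : e ∈ Finset.Icc 1 m) :
    tdist j e < m := by
  rw [Finset.mem_Icc] at hj he
  unfold tdist; omega

lemma Ik_le (m k : ℕ) (S : Finset ℕ) (j : ℕ) (h : ∀ e ∈ S, tdist j e < m) :
    Ik m k S j ≤ k * m := by
  rw [Ik_eq m k S j h]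
  calc ∑ t ∈ Finset.range m, (k - min k ((S.filter (fun e => tdist j e ≤ t)).card))
      ≤ ∑ _t ∈ Finset.range m, k := Finset.sum_le_sum (fun t _ => by omega)
    _ = k * m := by simp [mul_comm]

lemma Ik_antitone (m k : ℕ) (S T : Finset ℕ) (j : ℕ) (hsub : S ⊆ T)
    (h : ∀ e ∈ T, tdist j e < m) :
    Ik m k T j ≤ Ik m k S j := by
  rw [Ik_eq m k S j (fun e he => h e (hsub he)), Ik_eq m k T j h]
  apply Finset.sum_le_sum
  intro t _
  have : (S.filter (fun e => tdist j e ≤ t)).card ≤ (T.filter (fun e => tdist j e ≤ t)).card :=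
    Finset.card_le_card (Finset.filter_subset_filter _ hsub)
  omega

lemma Ik_supermodular (m k : ℕ) (X Y : Finset ℕ) (j : ℕ)
    (h : ∀ e ∈ X ∪ Y, tdist j e < m) :
    Ik m k X j + Ik m k Y j ≤ Ik m k (X ∩ Y) j + Ik m k (X ∪ Y) j := by
  have hX : ∀ e ∈ X, tdist j e < m := fun e he => h e (Finset.mem_union_left _ he)
  have hY : ∀ e ∈ Y, tdist j e < m := fun e he => h e (Finset.mem_union_right _ he)
  have hI : ∀ e ∈ X ∩ Y, tdist j e < m := fun e he => hX e (Finset.mem_of_mem_inter_left he)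
  rw [Ik_eq m k X j hX, Ik_eq m k Y j hY, Ik_eq m k (X ∩ Y) j hI, Ik_eq m k (X ∪ Y) j h,
    ← Finset.sum_add_distrib, ← Finset.sum_add_distrib]
  apply Finset.sum_le_sum
  intro t _
  have hcnt : ((X ∩ Y).filter (fun e => tdist j e ≤ t)).card
        + ((X ∪ Y).filter (fun e => tdist j e ≤ t)).card
      = (X.filter (fun e => tdist j e ≤ t)).card + (Y.filter (fun e => tdist j e ≤ t)).card := by
    rw [Finset.filter_inter_distrib, Finset.filter_union]
    exact Finset.card_inter_add_card_union _ _
  have h1 : ((X ∩ Y).filter (fun e => tdist j e ≤ t)).card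
      ≤ (X.filter (fun e => tdist j e ≤ t)).card :=
    Finset.card_le_card (Finset.filter_subset_filter _ Finset.inter_subset_left)
  have h2 : (X.filter (fun e => tdist j e ≤ t)).card
      ≤ ((X ∪ Y).filter (fun e => tdist j e ≤ t)).card :=
    Finset.card_le_card (Finset.filter_subset_filter _ Finset.subset_union_left)
  omega

/-! ### Auxiliary analytic lemmas -/

lemma negMulLog_mono (x y : ℝ) (hx : 0 ≤ x) (hxy : x ≤ y) (hy : y ≤ 1/3) :
    negMulLog x ≤ negMulLog y := by
  rcases eq_or_lt_of_le hx with h0 | h0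
  · rw [← h0, negMulLog_zero]
    exact negMulLog_nonneg (h0 ▸ hx.trans hxy) (by linarith)
  · rcases eq_or_lt_of_le hxy with rfl | hlt
    · exact le_refl _
    · have hmono : StrictMonoOn negMulLog (Set.Icc (0:ℝ) (1/3)) := by
        apply strictMonoOn_of_deriv_pos (convex_Icc _ _)
          continuous_negMulLog.continuousOn
        intro z hz
        rw [interior_Icc] at hz
        rw [deriv_negMulLog (ne_of_gt hz.1)]
        have h3 : (1:ℝ)/3 < exp (-1) := by
          rw [exp_neg, ← one_div]
          exact one_div_lt_one_div_of_lt (exp_pos 1) (lt_trans exp_one_lt_d9 (by norm_num))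
        have : log z < -1 := by
          calc log z < log (exp (-1)) := log_lt_log hz.1 (lt_of_lt_of_le hz.2 (le_of_lt h3))
            _ = -1 := log_exp _
        linarith
      exact le_of_lt (hmono ⟨le_of_lt h0, by linarith⟩ ⟨hx.trans hxy, hy⟩ hlt)

lemma negMulLog_four_point (a b c d : ℝ) (h0 : 0 ≤ a) (hab : a ≤ b) (hac : a ≤ c)
    (hbd : b ≤ d) (hcd : c ≤ d) (hd : d ≤ 1/3) (hsum : a + d ≤ b + c) :
    negMulLog a + negMulLog d ≤ negMulLog b + negMulLog c := by
  set c' : ℝ := a + d - b with hc'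
  have hac' : a ≤ c' := by linarith
  have hc'd : c' ≤ d := by linarith
  have hc'c : c' ≤ c := by linarith
  have step2 : negMulLog c' ≤ negMulLog c := negMulLog_mono c' c (by linarith) hc'c (by linarith)
  have step1 : negMulLog a + negMulLog d ≤ negMulLog b + negMulLog c' := by
    rcases eq_or_lt_of_le (hab.trans hbd) with heq | hlt
    · have hb : b = a := le_antisymm (heq ▸ hbd) hab
      have hc2 : c' = d := by rw [hc', hb]; ring
      rw [hb, hc2]
    · set lam : ℝ := (d - b) / (d - a) with hlam
      have hda : 0 < d - a := by linarith
      have hlam0 : 0 ≤ lam := div_nonneg (by linarith) (by linarith)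
      have hlam1 : 0 ≤ 1 - lam := by
        have : lam ≤ 1 := by rw [hlam, div_le_one hda]; linarith
        linarith
      have hmul : lam * (d - a) = d - b := by
        rw [hlam]; exact div_mul_cancel₀ _ (ne_of_gt hda)
      have hb_eq : b = lam * a + (1 - lam) * d := by linear_combination hmul
      have hc'_eq : c' = (1 - lam) * a + lam * d := by
        rw [hc']; linear_combination -hmul
      have hcon := concaveOn_negMulLog
      have h1 := hcon.2 (Set.mem_Ici.mpr h0) (Set.mem_Ici.mpr (by linarith : (0:ℝ) ≤ d))
        hlam0 hlam1 (by ring)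
      have h2 := hcon.2 (Set.mem_Ici.mpr h0) (Set.mem_Ici.mpr (by linarith : (0:ℝ) ≤ d))
        hlam1 hlam0 (by ring)
      simp only [smul_eq_mul] at h1 h2
      rw [← hb_eq] at h1
      rw [← hc'_eq] at h2
      nlinarith [h1, h2]
  linarith

/-! ### Properties of `rho` and `prob` -/

lemma rho_nonneg (m k : ℕ) (S : Finset ℕ) (j : ℕ) : 0 ≤ rho m k S j := by
  unfold rho
  split
  · exact le_refl _
  · positivity

lemma rho_le_one (m k : ℕ) (hm : 3 ≤ m) (hk : 1 ≤ k) (S : Finset ℕ) (j : ℕ)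
    (hS : S ⊆ Finset.Icc 1 m) (hj : j ∈ Finset.Icc 1 m) : rho m k S j ≤ 1 := by
  have hkm : (0:ℝ) < (k : ℝ) * (m : ℝ) := by
    have h1 : (0:ℝ) < (k:ℝ) := by exact_mod_cast hk
    have h2 : (0:ℝ) < (m:ℝ) := by exact_mod_cast (by omega : 0 < m)
    exact mul_pos h1 h2
  unfold rho
  split
  · linarith
  · rw [div_le_one hkm]
    have := Ik_le m k S j (fun e he => tdist_lt m j e hj (hS he))
    exact_mod_cast this

lemma rho_antitone (m k : ℕ) (hm : 3 ≤ m) (hk : 1 ≤ k) (S T : Finset ℕ) (j : ℕ) (hsub : S ⊆ T)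
    (hT : T ⊆ Finset.Icc 1 m) (hj : j ∈ Finset.Icc 1 m) :
    rho m k T j ≤ rho m k S j := by
  have hkm : (0:ℝ) < (k : ℝ) * (m : ℝ) := by
    have h1 : (0:ℝ) < (k:ℝ) := by exact_mod_cast hk
    have h2 : (0:ℝ) < (m:ℝ) := by exact_mod_cast (by omega : 0 < m)
    exact mul_pos h1 h2
  unfold rho
  by_cases hjT : j ∈ T
  · rw [if_pos hjT]
    split
    · exact le_refl _
    · positivity
  · have hjS : j ∉ S := fun h => hjT (hsub h)
    rw [if_neg hjT, if_neg hjS]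
    have hI := Ik_antitone m k S T j hsub (fun e he => tdist_lt m j e hj (hT he))
    exact div_le_div_of_nonneg_right (by exact_mod_cast hI) hkm.le

lemma rho_supermodular (m k : ℕ) (hm : 3 ≤ m) (hk : 1 ≤ k) (X Y : Finset ℕ)
    (hX : X ⊆ Finset.Icc 1 m) (hY : Y ⊆ Finset.Icc 1 m) (j : ℕ) (hj : j ∈ Finset.Icc 1 m) :
    rho m k X j + rho m k Y j ≤ rho m k (X ∩ Y) j + rho m k (X ∪ Y) j := by
  have hU : X ∪ Y ⊆ Finset.Icc 1 m := Finset.union_subset hX hY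
  have hkm : (0:ℝ) < (k : ℝ) * (m : ℝ) := by
    have h1 : (0:ℝ) < (k:ℝ) := by exact_mod_cast hk
    have h2 : (0:ℝ) < (m:ℝ) := by exact_mod_cast (by omega : 0 < m)
    exact mul_pos h1 h2
  by_cases hjX : j ∈ X <;> by_cases hjY : j ∈ Y
  · rw [rho, if_pos hjX, rho, if_pos hjY, rho, if_pos (Finset.mem_inter.mpr ⟨hjX, hjY⟩),
      rho, if_pos (Finset.mem_union_left _ hjX)]
  · rw [rho, if_pos hjX]
    rw [show rho m k (X ∪ Y) j = 0 from by rw [rho, if_pos (Finset.mem_union_left _ hjX)]]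
    have := rho_antitone m k hm hk (X ∩ Y) Y j Finset.inter_subset_right hY hj
    linarith
  · rw [show rho m k Y j = 0 from by rw [rho, if_pos hjY]]
    rw [show rho m k (X ∪ Y) j = 0 from by rw [rho, if_pos (Finset.mem_union_right _ hjY)]]
    have := rho_antitone m k hm hk (X ∩ Y) X j Finset.inter_subset_left hX hj
    linarith
  · have hjI : j ∉ X ∩ Y := fun h => hjX (Finset.mem_inter.mp h).1
    have hjU : j ∉ X ∪ Y := fun h => (Finset.mem_union.mp h).elim hjX hjY
    rw [rho, if_neg hjX, rho, if_neg hjY, rho, if_neg hjI, rho, if_neg hjU]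
    rw [← add_div, ← add_div]
    apply div_le_div_of_nonneg_right ?_ hkm.le
    have := Ik_supermodular m k X Y j (fun e he => tdist_lt m j e hj (hU he))
    exact_mod_cast this

lemma prob_term (m k : ℕ) (S : Finset ℕ) (j : ℕ) :
    -(prob m k S j * Real.logb 2 (prob m k S j)) = negMulLog (prob m k S j) / Real.log 2 := by
  rw [Real.logb, negMulLog]
  ring

/-- If `m ≥ 3`, the task quality is submodular. -/
theorem quality_submodular (m k : ℕ) (hm : 3 ≤ m) (hk : 1 ≤ k)
    (X Y : Finset ℕ) (hX : X ⊆ Finset.Icc 1 m) (hY : Y ⊆ Finset.Icc 1 m) :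
    quality m k (X ∩ Y) + quality m k (X ∪ Y) ≤ quality m k X + quality m k Y := by
  have hm0 : (0:ℝ) < (m:ℝ) := by exact_mod_cast (by omega : 0 < m)
  have hU : X ∪ Y ⊆ Finset.Icc 1 m := Finset.union_subset hX hY
  have hI : X ∩ Y ⊆ Finset.Icc 1 m := fun x hx => hX (Finset.mem_of_mem_inter_left hx)
  have hlog2 : (0:ℝ) < Real.log 2 := Real.log_pos (by norm_num)
  unfold quality
  rw [← Finset.sum_add_distrib, ← Finset.sum_add_distrib]
  apply Finset.sum_le_sum
  intro j hj
  rw [prob_term, prob_term, prob_term, prob_term, ← add_div, ← add_div]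
  apply div_le_div_of_nonneg_right ?_ hlog2.le
  have hbnd : ∀ S : Finset ℕ, S ⊆ Finset.Icc 1 m → 0 ≤ prob m k S j ∧ prob m k S j ≤ 1/3 := by
    intro S hS
    have h1 := rho_nonneg m k S j
    have h2 := rho_le_one m k hm hk S j hS hj
    constructor
    · unfold prob
      apply mul_nonneg (by positivity)
      linarith
    · unfold prob
      have : (1:ℝ) - rho m k S j ≤ 1 := by linarith
      calc (1 / (m:ℝ)) * (1 - rho m k S j) ≤ (1 / (m:ℝ)) * 1 := by
            apply mul_le_mul_of_nonneg_left this (by positivity)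
        _ = 1 / (m:ℝ) := mul_one _
        _ ≤ 1/3 := by
            rw [div_le_div_iff₀ hm0 (by norm_num)]
            have : (3:ℝ) ≤ (m:ℝ) := by exact_mod_cast hm
            linarith
  have hmono : ∀ S T : Finset ℕ, S ⊆ T → T ⊆ Finset.Icc 1 m →
      prob m k S j ≤ prob m k T j := by
    intro S T hsub hT
    unfold prob
    have := rho_antitone m k hm hk S T j hsub hT hj
    apply mul_le_mul_of_nonneg_left (by linarith) (by positivity)
  have hsub2 : prob m k (X ∩ Y) j + prob m k (X ∪ Y) j ≤ prob m k X j + prob m k Y j := by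
    unfold prob
    have := rho_supermodular m k hm hk X Y hX hY j hj
    have h1m : (0:ℝ) ≤ 1 / (m:ℝ) := by positivity
    nlinarith [this, h1m]
  exact negMulLog_four_point _ _ _ _ (hbnd _ hI).1
    (hmono _ _ Finset.inter_subset_left hX)
    (hmono _ _ Finset.inter_subset_right hY)
    (hmono _ _ Finset.subset_union_left hU)
    (hmono _ _ Finset.subset_union_right hU)
    (hbnd _ hU).2 hsub2
end

section
/- For every slot j ∈ {1,…,m}, the set function S ↦ p^S(j) is submodular: for all finite sets X, Y ⊆ {1,…,m}, p^{X ∩ Y}(j) + p^{X ∪ Y}(j) ≤ p^X(j) + p^Y(j). -/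
/-- sum of `k` smallest elements of a multiset. -/
def smin (k : ℕ) (s : Multiset ℕ) : ℕ := ((s.sort (· ≤ ·)).take k).sum

/-- `k`-th smallest element. -/
def kth (k : ℕ) (s : Multiset ℕ) : ℕ := (s.sort (· ≤ ·)).getD (k-1) 0

lemma sorted_getD_le {l : List ℕ} (hs : l.Pairwise (· ≤ ·)) {i j : ℕ}
    (hij : i ≤ j) (hj : j < l.length) : l.getD i 0 ≤ l.getD j 0 := by
  have hi : i < l.length := lt_of_le_of_lt hij hj
  rw [List.getD_eq_getElem _ _ hi, List.getD_eq_getElem _ _ hj]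
  rcases eq_or_lt_of_le hij with rfl | h
  · exact le_refl _
  · exact (List.pairwise_iff_getElem.mp hs) i j hi hj h

lemma take_sum_insert : ∀ (l : List ℕ) (k x : ℕ), l.Pairwise (· ≤ ·) → 1 ≤ k → k ≤ l.length →
    ((l.orderedInsert (· ≤ ·) x).take k).sum = (l.take (k-1)).sum + min x (l.getD (k-1) 0)
  | [], k, x, _, hk, hlen => by simp at hlen; omega
  | a :: l, k, x, hs, hk, hlen => by
    rw [List.orderedInsert]
    split_ifs with h
    · have hx : x ≤ (a :: l).getD (k-1) 0 := by
        refine le_trans h ?_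
        have h0 : (a :: l).getD 0 0 = a := rfl
        rw [← h0]
        exact sorted_getD_le hs (Nat.zero_le _) (by omega)
      rw [min_eq_left hx]
      obtain ⟨k', rfl⟩ : ∃ k', k = k' + 1 := ⟨k - 1, by omega⟩
      simp [List.take_succ_cons, Nat.add_comm]
    · match k with
      | 1 => simp [min_eq_right (le_of_not_ge h)]
      | (k+2) =>
        have hlen' : k + 1 ≤ l.length := by simpa using hlen
        have ih := take_sum_insert l (k+1) x hs.of_cons (by omega) hlen'
        rw [show k + 1 - 1 = k from rfl] at ih
        simp only [List.take_succ_cons, List.sum_cons, show k + 2 - 1 = k + 1 from rfl,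
          List.getD_cons_succ]
        omega

lemma getD_insert_le : ∀ (l : List ℕ) (i x : ℕ), l.Pairwise (· ≤ ·) → i < l.length →
    (l.orderedInsert (· ≤ ·) x).getD i 0 ≤ l.getD i 0
  | [], i, x, _, hi => by simp at hi
  | a :: l, i, x, hs, hi => by
    rw [List.orderedInsert]
    split_ifs with h
    · match i with
      | 0 => simpa using h
      | (i+1) =>
        simp only [List.getD_cons_succ]
        exact sorted_getD_le hs (Nat.le_succ i) (by simpa using hi)
    · match i with
      | 0 => simp
      | (i+1) =>
        simp only [List.getD_cons_succ]
        exact getD_insert_le l i x hs.of_cons (by simpa using hi)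

theorem List.eq_of_perm_of_sorted {l₁ l₂ : List ℕ} (hp : l₁.Perm l₂)
    (h1 : l₁.Pairwise (· ≤ ·)) (h2 : l₂.Pairwise (· ≤ ·)) : l₁ = l₂ :=
  hp.eq_of_pairwise' h1 h2

lemma sort_cons_eq (x : ℕ) (s : Multiset ℕ) :
    (x ::ₘ s).sort (· ≤ ·) = (s.sort (· ≤ ·)).orderedInsert (· ≤ ·) x := by
  apply List.eq_of_perm_of_sorted _ (Multiset.pairwise_sort _ _)
    (List.Pairwise.orderedInsert x _ (Multiset.pairwise_sort _ _))
  refine List.Perm.trans ?_ (List.perm_orderedInsert _ x _).symm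
  rw [← Multiset.coe_eq_coe]
  simp [Multiset.sort_eq, ← Multiset.cons_coe]

lemma smin_eq (k : ℕ) (s : Multiset ℕ) (hk : 1 ≤ k) (hc : k ≤ Multiset.card s) :
    smin k s = ((s.sort (· ≤ ·)).take (k-1)).sum + kth k s := by
  unfold smin kth
  set l := s.sort (· ≤ ·) with hl
  have hlen : l.length = Multiset.card s := Multiset.length_sort _
  have hlt : k - 1 < l.length := by omega
  have h1 : l.take k = l.take (k-1) ++ [l.getD (k-1) 0] := by
    conv_lhs => rw [show k = (k-1)+1 from (by omega)]
    rw [List.take_succ, List.getElem?_eq_getElem hlt, List.getD_eq_getElem _ _ hlt]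
    simp
  rw [h1, List.sum_append]
  simp

lemma smin_cons (x k : ℕ) (s : Multiset ℕ) (hk : 1 ≤ k) (hc : k ≤ Multiset.card s) :
    smin k (x ::ₘ s) = ((s.sort (· ≤ ·)).take (k-1)).sum + min x (kth k s) := by
  unfold smin kth
  rw [sort_cons_eq]
  exact take_sum_insert _ _ _ (Multiset.pairwise_sort _ _) hk
    (by rw [Multiset.length_sort]; exact hc)

lemma kth_cons_le (x k : ℕ) (s : Multiset ℕ) (hk : 1 ≤ k) (hc : k ≤ Multiset.card s) :
    kth k (x ::ₘ s) ≤ kth k s := by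
  unfold kth
  rw [sort_cons_eq]
  exact getD_insert_le _ _ _ (Multiset.pairwise_sort _ _)
    (by rw [Multiset.length_sort]; omega)

lemma smin_cons_le (x k : ℕ) (s : Multiset ℕ) (hk : 1 ≤ k) (hc : k ≤ Multiset.card s) :
    smin k (x ::ₘ s) ≤ smin k s := by
  rw [smin_cons x k s hk hc, smin_eq k s hk hc]
  exact Nat.add_le_add_left (min_le_right _ _) _

lemma smin_add_le (k : ℕ) (s d : Multiset ℕ) (hk : 1 ≤ k) (hc : k ≤ Multiset.card s) :
    smin k (s + d) ≤ smin k s := by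
  induction d using Multiset.induction_on with
  | empty => simp
  | cons x d ih =>
    rw [show s + (x ::ₘ d) = x ::ₘ (s + d) by
      rw [Multiset.add_cons]]
    exact le_trans (smin_cons_le x k (s + d) hk (le_trans hc (by simp))) ih

lemma kth_add_le (k : ℕ) (s d : Multiset ℕ) (hk : 1 ≤ k) (hc : k ≤ Multiset.card s) :
    kth k (s + d) ≤ kth k s := by
  induction d using Multiset.induction_on with
  | empty => simp
  | cons x d ih =>
    rw [show s + (x ::ₘ d) = x ::ₘ (s + d) by rw [Multiset.add_cons]]
    exact le_trans (kth_cons_le x k (s + d) hk (le_trans hc (by simp))) ih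

lemma exchange (x k : ℕ) {s t : Multiset ℕ} (hst : s ≤ t) (hk : 1 ≤ k)
    (hc : k ≤ Multiset.card s) :
    smin k t + smin k (x ::ₘ s) ≤ smin k s + smin k (x ::ₘ t) := by
  have hct : k ≤ Multiset.card t := le_trans hc (Multiset.card_le_card hst)
  obtain ⟨d, rfl⟩ := Multiset.le_iff_exists_add.mp hst
  have hkt : kth k (s + d) ≤ kth k s := kth_add_le k s d hk hc
  rw [smin_cons x k s hk hc, smin_cons x k (s + d) hk hct,
    smin_eq k s hk hc, smin_eq k (s + d) hk hct]
  have h1 : kth k (s + d) + min x (kth k s) ≤ kth k s + min x (kth k (s + d)) := by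
    rw [Nat.min_def, Nat.min_def]; split_ifs <;> omega
  omega

lemma supermod_add (k : ℕ) (d : Multiset ℕ) : ∀ (i b : Multiset ℕ), i ≤ b → 1 ≤ k →
    k ≤ Multiset.card i → smin k (i + d) + smin k b ≤ smin k i + smin k (b + d) := by
  induction d using Multiset.induction_on with
  | empty => intro i b _ _ _; simp [Nat.add_comm]
  | cons x d ih =>
    intro i b hib hk hc
    have h1 := ih i b hib hk hc
    have h2 := exchange x k (s := i + d) (t := b + d)
      (add_le_add_left hib d) hk (le_trans hc (by simp))
    rw [show i + (x ::ₘ d) = x ::ₘ (i + d) by rw [Multiset.add_cons],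
      show b + (x ::ₘ d) = x ::ₘ (b + d) by rw [Multiset.add_cons]]
    omega

lemma supermod {k : ℕ} {i a b u : Multiset ℕ} (hia : i ≤ a) (hib : i ≤ b)
    (hiu : i + u = a + b) (hk : 1 ≤ k) (hc : k ≤ Multiset.card i) :
    smin k a + smin k b ≤ smin k i + smin k u := by
  obtain ⟨d, rfl⟩ := Multiset.le_iff_exists_add.mp hia
  have hu : u = b + d := by
    have : i + u = i + (b + d) := by rw [hiu]; simp [add_comm, add_assoc, add_left_comm]
    exact add_left_cancel this
  subst hu
  exact supermod_add k d i b hib hk hc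



lemma sorted_pad (s : Multiset ℕ) (n m : ℕ) (h : ∀ x ∈ s, x ≤ m) :
    (s + Multiset.replicate n m).sort (· ≤ ·) = s.sort (· ≤ ·) ++ List.replicate n m := by
  refine List.eq_of_perm_of_sorted ?_ (Multiset.pairwise_sort _ _) ?_
  · rw [← Multiset.coe_eq_coe, Multiset.sort_eq, ← Multiset.coe_add, Multiset.sort_eq,
      Multiset.coe_replicate]
  · rw [List.pairwise_append]
    refine ⟨Multiset.pairwise_sort _ _, List.pairwise_replicate.mpr (Or.inr (le_refl m)), ?_⟩
    intro x hx y hy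
    rw [List.eq_of_mem_replicate hy]
    exact h x ((Multiset.mem_sort _).mp hx)

lemma sum_sort (s : Multiset ℕ) : (s.sort (· ≤ ·)).sum = s.sum := by
  conv_rhs => rw [← Multiset.sort_eq s (· ≤ ·)]
  rfl

lemma Ik_eq_smin (m k : ℕ) (S : Finset ℕ) (j : ℕ)
    (h : ∀ x ∈ S.val.map (fun e => tdist j e), x ≤ m) :
    Ik m k S j = smin k (S.val.map (fun e => tdist j e) + Multiset.replicate k m) := by
  unfold Ik smin
  rw [sorted_pad _ _ _ h]
  set l := (S.val.map (fun e => tdist j e)).sort (· ≤ ·) with hl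
  have hlen : l.length = S.card := by
    rw [hl, Multiset.length_sort, Multiset.card_map]; rfl
  by_cases hc : k ≤ S.card
  · rw [if_pos hc, List.take_append_of_le_length (by omega)]
  · rw [if_neg hc, List.take_append, List.take_of_length_le (by omega),
      List.take_replicate, List.sum_append, List.sum_replicate]
    rw [hl, sum_sort]
    have : (k - l.length) ⊓ k = k - S.card := by omega
    rw [this, smul_eq_mul]



lemma msd_card (m k : ℕ) (S : Finset ℕ) (j : ℕ) :
    k ≤ Multiset.card (S.val.map (fun e => tdist j e) + Multiset.replicate k m) := by
  simp

lemma Ik_anti (m k : ℕ) (j : ℕ) (hk : 1 ≤ k) {S T : Finset ℕ}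
    (hT : ∀ x ∈ T.val.map (fun e => tdist j e), x ≤ m) (hST : S ⊆ T) :
    Ik m k T j ≤ Ik m k S j := by
  have hS : ∀ x ∈ S.val.map (fun e => tdist j e), x ≤ m := fun x hx => by
    rw [Multiset.mem_map] at hx
    obtain ⟨e, he, rfl⟩ := hx
    exact hT _ (Multiset.mem_map.mpr ⟨e, Finset.mem_def.mp (hST (Finset.mem_def.mpr he)), rfl⟩)
  rw [Ik_eq_smin m k S j hS, Ik_eq_smin m k T j hT]
  have hle : S.val.map (fun e => tdist j e) + Multiset.replicate k m ≤
      T.val.map (fun e => tdist j e) + Multiset.replicate k m :=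
    add_le_add_left (Multiset.map_le_map (Finset.val_le_iff.mpr hST)) _
  obtain ⟨d, hd⟩ := Multiset.le_iff_exists_add.mp hle
  rw [hd]
  exact smin_add_le k _ d hk (msd_card m k S j)

/-- For every slot `j`, the finishing probability `S ↦ p^S(j)` is submodular. -/
theorem prob_submodular (m k : ℕ) (hm : 2 ≤ m) (hk : 1 ≤ k)
    (j : ℕ) (hj : j ∈ Finset.Icc 1 m)
    (X Y : Finset ℕ) (hX : X ⊆ Finset.Icc 1 m) (hY : Y ⊆ Finset.Icc 1 m) :
    prob m k (X ∩ Y) j + prob m k (X ∪ Y) j ≤ prob m k X j + prob m k Y j := by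
  rw [Finset.mem_Icc] at hj
  have hkm : (0:ℝ) < (k:ℝ) * m := by
    have h1 : (0:ℝ) < (k:ℝ) := by exact_mod_cast hk
    have h2 : (0:ℝ) < (m:ℝ) := by positivity
    positivity
  have hb : ∀ (S : Finset ℕ), S ⊆ Finset.Icc 1 m →
      ∀ x ∈ S.val.map (fun e => tdist j e), x ≤ m := by
    intro S hS x hx
    rw [Multiset.mem_map] at hx
    obtain ⟨e, he, rfl⟩ := hx
    have h2 := hS (Finset.mem_def.mpr he)
    rw [Finset.mem_Icc] at h2
    simp only [tdist]
    omega
  have hXY : X ∩ Y ⊆ Finset.Icc 1 m := subset_trans Finset.inter_subset_left hX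
  have hXuY : X ∪ Y ⊆ Finset.Icc 1 m := Finset.union_subset hX hY
  have hrho : rho m k X j + rho m k Y j ≤ rho m k (X ∩ Y) j + rho m k (X ∪ Y) j := by
    by_cases hx : j ∈ X <;> by_cases hy : j ∈ Y
    · have h1 : j ∈ X ∩ Y := Finset.mem_inter.mpr ⟨hx, hy⟩
      have h2 : j ∈ X ∪ Y := Finset.mem_union_left Y hx
      simp [rho, hx, hy, h1, h2]
    · have h1 : j ∉ X ∩ Y := by simp [Finset.mem_inter, hy]
      have h2 : j ∈ X ∪ Y := Finset.mem_union_left Y hx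
      simp only [rho, if_pos hx, if_pos h2, if_neg hy, if_neg h1, add_zero, zero_add]
      gcongr
      exact_mod_cast Ik_anti m k j hk (hb Y hY) Finset.inter_subset_right
    · have h1 : j ∉ X ∩ Y := by simp [Finset.mem_inter, hx]
      have h2 : j ∈ X ∪ Y := Finset.mem_union_right X hy
      simp only [rho, if_pos hy, if_pos h2, if_neg hx, if_neg h1, add_zero, zero_add]
      gcongr
      exact_mod_cast Ik_anti m k j hk (hb X hX) Finset.inter_subset_left
    · have h1 : j ∉ X ∩ Y := by simp [Finset.mem_inter, hx]
      have h2 : j ∉ X ∪ Y := by simp [Finset.mem_union, hx, hy]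
      simp only [rho, if_neg hx, if_neg hy, if_neg h1, if_neg h2]
      rw [← add_div, ← add_div]
      have key : Ik m k X j + Ik m k Y j ≤ Ik m k (X ∩ Y) j + Ik m k (X ∪ Y) j := by
        rw [Ik_eq_smin m k X j (hb X hX), Ik_eq_smin m k Y j (hb Y hY),
          Ik_eq_smin m k (X ∩ Y) j (hb _ hXY), Ik_eq_smin m k (X ∪ Y) j (hb _ hXuY)]
        apply supermod ?_ ?_ ?_ hk (msd_card m k (X ∩ Y) j)
        · exact add_le_add_left
            (Multiset.map_le_map (Finset.val_le_iff.mpr Finset.inter_subset_left)) _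
        · exact add_le_add_left
            (Multiset.map_le_map (Finset.val_le_iff.mpr Finset.inter_subset_right)) _
        · have hval : (X ∩ Y).val + (X ∪ Y).val = X.val + Y.val := by
            rw [Finset.inter_val, Finset.union_val, add_comm, Multiset.union_add_inter]
          have hmap : Multiset.map (fun e => tdist j e) (X ∩ Y).val +
              Multiset.map (fun e => tdist j e) (X ∪ Y).val =
              Multiset.map (fun e => tdist j e) X.val +
              Multiset.map (fun e => tdist j e) Y.val := by
            rw [← Multiset.map_add, hval, Multiset.map_add]
          rw [add_add_add_comm, hmap, add_add_add_comm]
      exact div_le_div_of_nonneg_right (by exact_mod_cast key) hkm.le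
  unfold prob
  have h1 : (0:ℝ) ≤ 1/(m:ℝ) := by positivity
  have h2 := mul_le_mul_of_nonneg_left hrho h1
  ring_nf at h2 ⊢
  linarith
end
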